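/- Let ω < 0 and 0 < α ≤ 1. For every θ ∈ (0, απ/2), setting μ(θ) = (|ω| sin θ / sin(απ/2 − θ))^(1/α) and ρ(θ) = |ω| sin(απ/2)/sin(απ/2 − θ), one has the identity (i·μ(θ))^α − ω = ρ(θ)·exp(iθ), where (i·μ(θ))^α is the principal-branch complex power. -/

import Mathlib

open Real Complex Filter Set Topology

/-- The curve parametrization Λ(θ) bounding the stability region. -/
noncomputable def Lam (α β γ ω : ℝ) (θ : ℝ) : ℂ :=
  ((|ω| ^ (β / α) * Real.sin θ ^ (β / α - γ) * Real.sin (α * π / 2) ^ γ *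
      Real.sin (α * π / 2 - θ) ^ (-(β / α)) : ℝ) : ℂ) *
    Complex.exp (Complex.I * ((γ * θ + (β - α * γ) * π / 2 : ℝ) : ℂ))

/-- The characteristic function F(s) = s^(β-αγ) (s^α - ω)^γ (principal branches). -/
noncomputable def Fc (α β γ ω : ℝ) (s : ℂ) : ℂ :=
  s ^ ((β - α * γ : ℝ) : ℂ) * (s ^ ((α : ℝ) : ℂ) - (ω : ℂ)) ^ ((γ : ℝ) : ℂ)

/-- μ(θ) = (|ω| sin θ / sin(απ/2 - θ))^(1/α). -/
noncomputable def muP (α ω : ℝ) (θ : ℝ) : ℝ :=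
  (|ω| * Real.sin θ / Real.sin (α * π / 2 - θ)) ^ (1 / α)

/-- ρ(θ) = |ω| sin(απ/2) / sin(απ/2 - θ). -/
noncomputable def rhoP (α ω : ℝ) (θ : ℝ) : ℝ :=
  |ω| * Real.sin (α * π / 2) / Real.sin (α * π / 2 - θ)

theorem imaginary_power_identity (α ω : ℝ) (hω : ω < 0) (hα0 : 0 < α) (hα1 : α ≤ 1) :
    ∀ θ ∈ Set.Ioo 0 (α * π / 2),
      (Complex.I * (muP α ω θ : ℂ)) ^ ((α : ℝ) : ℂ) - (ω : ℂ) =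
        (rhoP α ω θ : ℂ) * Complex.exp (Complex.I * (θ : ℂ)) := by
  rintro θ ⟨hθ0, hθ2⟩
  have hπ : (0:ℝ) < π := Real.pi_pos
  have hs : 0 < Real.sin (α * π / 2 - θ) := by
    apply Real.sin_pos_of_pos_of_lt_pi
    · linarith
    · nlinarith
  have hsinθ : 0 < Real.sin θ := by
    apply Real.sin_pos_of_pos_of_lt_pi hθ0
    nlinarith
  have hω' : 0 < |ω| := abs_pos.mpr hω.ne
  set K := |ω| * Real.sin θ / Real.sin (α * π / 2 - θ) with hK
  have hK0 : 0 < K := by positivity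
  have hm : 0 < muP α ω θ := Real.rpow_pos_of_pos hK0 _
  set m := muP α ω θ with hmdef
  have hmα : m ^ α = K := by
    rw [hmdef, muP, ← hK, ← Real.rpow_mul hK0.le, one_div_mul_cancel hα0.ne', Real.rpow_one]
  have hne : Complex.I * (m:ℂ) ≠ 0 := by
    simp [Complex.ext_iff, hm.ne']
  have harg : Complex.arg (Complex.I * (m:ℂ)) = π/2 := by
    rw [Complex.arg_eq_pi_div_two_iff]
    constructor <;> simp [hm]
  have habs : ‖Complex.I * (m:ℂ)‖ = m := by
    simp [abs_of_pos hm]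
  have hlog : Complex.log (Complex.I * (m:ℂ)) =
      (Real.log m : ℂ) + ((π/2 : ℝ) : ℂ) * Complex.I := by
    rw [Complex.log, habs, harg]
  have hpow : (Complex.I * (m:ℂ)) ^ ((α : ℝ) : ℂ) =
      ((K : ℝ) : ℂ) * Complex.exp (((α * π / 2 : ℝ) : ℂ) * Complex.I) := by
    rw [Complex.cpow_def_of_ne_zero hne, hlog, add_mul, Complex.exp_add]
    congr 1
    · have : ((Real.log m : ℝ) : ℂ) * ((α : ℝ) : ℂ) = ((Real.log m * α : ℝ) : ℂ) := by
        push_cast; ring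
      rw [this, ← Complex.ofReal_exp]
      congr 1
      rw [← hmα, Real.rpow_def_of_pos hm]
    · congr 1
      push_cast
      ring
  rw [hpow, Complex.exp_mul_I]
  rw [show Complex.I * (θ:ℂ) = (θ:ℂ) * Complex.I by ring, Complex.exp_mul_I]
  rw [abs_of_neg hω] at hK hω'
  apply Complex.ext <;>
    simp only [rhoP, Complex.mul_re, Complex.mul_im, Complex.add_re, Complex.add_im,
      Complex.sub_re, Complex.sub_im, Complex.ofReal_re, Complex.ofReal_im,
      Complex.I_re, Complex.I_im, ← Complex.ofReal_cos, ← Complex.ofReal_sin,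
      abs_of_neg hω]
  all_goals
    rw [hK]
    have hs2 : Real.sin ((α * π - 2 * θ) / 2) ≠ 0 := by
      rw [show (α * π - 2 * θ) / 2 = α * π / 2 - θ by ring]; exact hs.ne'
    field_simp [hs2]
    try rw [show (α * π - 2 * θ) / 2 = α * π / 2 - θ by ring, Real.sin_sub]
    ring
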